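/- For every real number δ with 0 < δ ≤ 1/(2Ld) and every x ∈ ℝ^d, the matrix I − δ∇²U(x) is invertible and |det(I − δ∇²U(x))^{-1} − (1 + δ·tr(∇²U(x)))| ≤ 64·δ²·d²·L². -/

import Mathlib

/-- The operator norm of a `d × d` real matrix with respect to the Euclidean
norm on `ℝ^d`. -/
noncomputable def matOpNorm {d : ℕ} (A : Matrix (Fin d) (Fin d) ℝ) : ℝ :=
  ‖Matrix.toEuclideanCLM (𝕜 := ℝ) A‖

/-- The Hessian matrix of `U : ℝ^d → ℝ` at `x`. -/
noncomputable def hessMat {d : ℕ} (U : EuclideanSpace ℝ (Fin d) → ℝ)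
    (x : EuclideanSpace ℝ (Fin d)) : Matrix (Fin d) (Fin d) ℝ :=
  fun i j =>
    iteratedFDeriv ℝ 2 U x ![EuclideanSpace.single i 1, EuclideanSpace.single j 1]

lemma aux_prod {ι : Type*} (a : ι → ℝ) (s : Finset ι)
    (h : ∑ i ∈ s, |a i| ≤ 1/2) :
    |(∏ i ∈ s, (1 - a i))⁻¹ - (1 + ∑ i ∈ s, a i)| ≤ 2 * (∑ i ∈ s, |a i|) ^ 2 := by
  revert h
  induction s using Finset.cons_induction_on with
  | empty => simp
  | @cons i s his IH =>
    intro h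
    rw [Finset.sum_cons, Finset.prod_cons, Finset.sum_cons]
    rw [Finset.sum_cons] at h
    set T := ∑ j ∈ s, |a j| with hTdef
    set S := ∑ j ∈ s, a j with hSdef
    have hT0 : 0 ≤ T := Finset.sum_nonneg fun _ _ => abs_nonneg _
    have hb0 : 0 ≤ |a i| := abs_nonneg _
    have hT : T ≤ 1/2 := by linarith
    have hIH := IH (by linarith)
    have hS : |S| ≤ T := (Finset.abs_sum_le_sum_abs _ _)
    have haux := abs_le.1 (show |a i| ≤ 1/2 by linarith)
    have h1a : (1:ℝ)/2 ≤ 1 - a i := by linarith [haux.2]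
    have hQpos : 0 < ∏ j ∈ s, (1 - a j) := by
      apply Finset.prod_pos
      intro j hj
      have h1 : |a j| ≤ T :=
        Finset.single_le_sum (f := fun j => |a j|) (fun _ _ => abs_nonneg _) hj
      have := abs_le.1 (h1.trans hT)
      linarith [this.2]
    set P := (∏ j ∈ s, (1 - a j))⁻¹ with hPdef
    have hne : (1 - a i) ≠ 0 := by linarith
    have key : ((1 - a i) * ∏ j ∈ s, (1 - a j))⁻¹ - (1 + (a i + S)) =
        ((P - (1 + S)) + a i * (S + a i)) / (1 - a i) := by
      rw [mul_inv, hPdef]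
      field_simp
      ring
    rw [key, abs_div, abs_of_pos (by linarith : (0:ℝ) < 1 - a i)]
    have hnum : |(P - (1 + S)) + a i * (S + a i)| ≤ 2 * T ^ 2 + |a i| * (T + |a i|) :=
      calc |(P - (1 + S)) + a i * (S + a i)| ≤ |P - (1 + S)| + |a i * (S + a i)| := abs_add_le _ _
        _ ≤ 2 * T ^ 2 + |a i| * (T + |a i|) := by
            rw [abs_mul]
            gcongr
            calc |S + a i| ≤ |S| + |a i| := abs_add_le _ _
              _ ≤ T + |a i| := by linarith
    rw [div_le_iff₀ (by linarith : (0:ℝ) < 1 - a i)]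
    have hab : a i ≤ |a i| := le_abs_self _
    have hkey2 : |a i| * (2 * (T + |a i|) ^ 2) ≤ |a i| * (T + |a i|) := by
      apply mul_le_mul_of_nonneg_left _ hb0
      nlinarith
    have hkey3 : a i * (2 * (T + |a i|) ^ 2) ≤ |a i| * (2 * (T + |a i|) ^ 2) :=
      mul_le_mul_of_nonneg_right hab (by positivity)
    have hTb : 0 ≤ |a i| * T := mul_nonneg hb0 hT0
    nlinarith [hnum, hkey2, hkey3, hTb]

lemma hessMat_isHermitian {d : ℕ} (U : EuclideanSpace ℝ (Fin d) → ℝ)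
    (hU : ContDiff ℝ 2 U) (x : EuclideanSpace ℝ (Fin d)) :
    (hessMat U x).IsHermitian := by
  have hs : IsSymmSndFDerivAt ℝ U x := (hU.contDiffAt).isSymmSndFDerivAt (by simp)
  apply Matrix.IsHermitian.ext
  intro i j
  simp only [hessMat, Matrix.conjTranspose_apply, star_trivial]
  rw [iteratedFDeriv_two_apply, iteratedFDeriv_two_apply]
  simpa using hs (EuclideanSpace.single j 1) (EuclideanSpace.single i 1)

set_option synthInstance.maxHeartbeats 1000000 in
lemma eig_abs_le {d : ℕ} (H : Matrix (Fin d) (Fin d) ℝ) (hH : H.IsHermitian) (i : Fin d) (L : ℝ)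
    (hL : matOpNorm H ≤ L) : |hH.eigenvalues i| ≤ L := by
  have hv : ‖hH.eigenvectorBasis i‖ = 1 := hH.eigenvectorBasis.orthonormal.1 i
  have hm := hH.mulVec_eigenvectorBasis i
  have happ : Matrix.toEuclideanCLM (𝕜 := ℝ) H (hH.eigenvectorBasis i)
      = hH.eigenvalues i • hH.eigenvectorBasis i := by
    apply (WithLp.equiv 2 _).injective
    rw [WithLp.equiv_apply, Matrix.ofLp_toEuclideanCLM]
    simp [hm]
  have h2 := (Matrix.toEuclideanCLM (𝕜 := ℝ) H).le_opNorm (hH.eigenvectorBasis i)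
  rw [happ, norm_smul, hv, Real.norm_eq_abs, mul_one, mul_one] at h2
  exact h2.trans hL

set_option maxHeartbeats 800000 in
set_option synthInstance.maxHeartbeats 400000 in
lemma det_trace_aux {d : ℕ} (H : Matrix (Fin d) (Fin d) ℝ) (hH : H.IsHermitian) (δ : ℝ) :
    (1 - δ • H).det = ∏ i, (1 - δ * hH.eigenvalues i) ∧
      H.trace = ∑ i, hH.eigenvalues i := by
  have hVV : (Matrix.IsHermitian.eigenvectorUnitary hH : Matrix (Fin d) (Fin d) ℝ) *
      star (Matrix.IsHermitian.eigenvectorUnitary hH : Matrix (Fin d) (Fin d) ℝ) = 1 :=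
    Matrix.mem_unitaryGroup_iff.mp (Matrix.IsHermitian.eigenvectorUnitary hH).2
  have hVV' : star (Matrix.IsHermitian.eigenvectorUnitary hH : Matrix (Fin d) (Fin d) ℝ) *
      (Matrix.IsHermitian.eigenvectorUnitary hH : Matrix (Fin d) (Fin d) ℝ) = 1 :=
    Matrix.mem_unitaryGroup_iff'.mp (Matrix.IsHermitian.eigenvectorUnitary hH).2
  set V := (Matrix.IsHermitian.eigenvectorUnitary hH : Matrix (Fin d) (Fin d) ℝ) with hV
  set D := Matrix.diagonal ((RCLike.ofReal : ℝ → ℝ) ∘ hH.eigenvalues) with hD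
  have hst : H = V * D * star V := hH.spectral_theorem
  constructor
  · have key : 1 - δ • H = V * (1 - δ • D) * star V := by
      rw [Matrix.mul_sub, Matrix.sub_mul, Matrix.mul_one, hVV, Matrix.mul_smul,
        Matrix.smul_mul, ← hst]
    have hdetV : V.det * (star V).det = 1 := by
      rw [← Matrix.det_mul, hVV, Matrix.det_one]
    rw [key, Matrix.det_mul, Matrix.det_mul]
    have hmid : (1 - δ • D) = Matrix.diagonal (fun i => 1 - δ * hH.eigenvalues i) := by
      ext i j
      by_cases hij : i = j <;>
        simp [hD, Matrix.diagonal_apply, hij, Matrix.one_apply, Matrix.sub_apply]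
    rw [hmid, Matrix.det_diagonal, mul_comm V.det, mul_assoc, hdetV, mul_one]
  · conv_lhs => rw [hst]
    rw [Matrix.trace_mul_cycle, hVV', Matrix.one_mul, hD, Matrix.trace_diagonal]
    simp [RCLike.ofReal_real_eq_id]

theorem stmt1 {d : ℕ} (hd : 0 < d) (U : EuclideanSpace ℝ (Fin d) → ℝ)
    (L : ℝ) (hL : 0 < L) (hU : ContDiff ℝ 2 U)
    (hHess : ∀ x, matOpNorm (hessMat U x) ≤ L)
    (δ : ℝ) (hδ0 : 0 < δ) (hδ : δ ≤ 1 / (2 * L * d)) (x : EuclideanSpace ℝ (Fin d)) :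
    IsUnit (1 - δ • hessMat U x) ∧
      |((1 - δ • hessMat U x).det)⁻¹ - (1 + δ * (hessMat U x).trace)| ≤
        64 * δ ^ 2 * (d : ℝ) ^ 2 * L ^ 2 := by
  have hH : (hessMat U x).IsHermitian := hessMat_isHermitian U hU x
  obtain ⟨hdet, htr⟩ := det_trace_aux (hessMat U x) hH δ
  have hd' : (0:ℝ) < d := by exact_mod_cast hd
  have heig : ∀ i, |hH.eigenvalues i| ≤ L := fun i => eig_abs_le _ hH i L (hHess x)
  have hδL : (0:ℝ) < 2 * L * d := by positivity
  have hδ1 : δ * (2 * L * (d:ℝ)) ≤ 1 := by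
    rw [le_div_iff₀ hδL] at hδ; exact hδ
  have hsum : ∑ i, |δ * hH.eigenvalues i| ≤ δ * L * d := by
    calc ∑ i, |δ * hH.eigenvalues i| ≤ ∑ _i : Fin d, δ * L :=
          Finset.sum_le_sum (fun i _ => by
            rw [abs_mul, abs_of_pos hδ0]
            exact mul_le_mul_of_nonneg_left (heig i) hδ0.le)
      _ = δ * L * d := by
          rw [Finset.sum_const, Finset.card_univ, Fintype.card_fin, nsmul_eq_mul]; ring
  have hhalf : ∑ i, |δ * hH.eigenvalues i| ≤ 1/2 := hsum.trans (by nlinarith)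
  have habs := aux_prod (fun i => δ * hH.eigenvalues i) Finset.univ hhalf
  constructor
  · rw [Matrix.isUnit_iff_isUnit_det, isUnit_iff_ne_zero, hdet]
    apply ne_of_gt
    apply Finset.prod_pos
    intro i _
    have hle : |δ * hH.eigenvalues i| ≤ 1/2 :=
      le_trans (Finset.single_le_sum (f := fun i => |δ * hH.eigenvalues i|)
        (fun _ _ => abs_nonneg _) (Finset.mem_univ i)) hhalf
    have := abs_le.1 hle
    linarith [this.2]
  · rw [hdet, htr, Finset.mul_sum]
    have hTnn : 0 ≤ ∑ i, |δ * hH.eigenvalues i| := Finset.sum_nonneg fun _ _ => abs_nonneg _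
    calc |(∏ i, (1 - δ * hH.eigenvalues i))⁻¹ - (1 + ∑ i, δ * hH.eigenvalues i)|
        ≤ 2 * (∑ i, |δ * hH.eigenvalues i|) ^ 2 := habs
      _ ≤ 2 * (δ * L * d) ^ 2 := by gcongr
      _ ≤ 64 * δ ^ 2 * (d : ℝ) ^ 2 * L ^ 2 := by nlinarith [sq_nonneg (δ * L * (d:ℝ))]
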